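/- arXiv:1909.11393 — 6 statements merged into one kernel-verified Lean document; each statement's English description precedes it below -/
import Mathlib

section
/- Let Π : M → N be a fibration, X a vector field on M, and σ : N → M a section of Π. Then σ is a solution of the Π-Hamilton–Jacobi equation for X (i.e. σ_* ∘ X^σ = X ∘ σ with X^σ = Π_* ∘ X ∘ σ) if and only if the image of σ is an X-invariant submanifold of M. -/
open scoped Manifold

/-- A section `σ` of a fibration `proj : M → N` solves the Π-Hamilton–Jacobi
equation for `X` (i.e. `σ_* ∘ X^σ = X ∘ σ` with `X^σ = proj_* ∘ X ∘ σ`) iff the image of `σ`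
is an `X`-invariant submanifold, i.e. `X (σ q)` is tangent to `Im σ` (lies in the range of
`σ_*` at `q`) for every `q`. -/
theorem stmt_1
    {E : Type*} [NormedAddCommGroup E] [NormedSpace ℝ E] [FiniteDimensional ℝ E]
    {F : Type*} [NormedAddCommGroup F] [NormedSpace ℝ F] [FiniteDimensional ℝ F]
    {HM : Type*} [TopologicalSpace HM] {HN : Type*} [TopologicalSpace HN]
    (I : ModelWithCorners ℝ E HM) (J : ModelWithCorners ℝ F HN)
    {M : Type*} [TopologicalSpace M] [ChartedSpace HM M] [IsManifold I (⊤ : ℕ∞) M]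
    {N : Type*} [TopologicalSpace N] [ChartedSpace HN N] [IsManifold J (⊤ : ℕ∞) N]
    (proj : M → N) (hproj : ContMDiff I J (⊤ : ℕ∞) proj)
    (hsurj : Function.Surjective proj)
    (hsubm : ∀ p : M, Function.Surjective (mfderiv I J proj p))
    (X : (p : M) → TangentSpace I p)
    (hX : ContMDiff I I.tangent (⊤ : ℕ∞) (fun p => (⟨p, X p⟩ : TangentBundle I M)))
    (σ : N → M) (hσ : ContMDiff J I (⊤ : ℕ∞) σ)
    (hsec : ∀ q, proj (σ q) = q)
    (Xσ : (q : N) → TangentSpace J q)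
    (hXσ : ∀ q, Xσ q = mfderiv I J proj (σ q) (X (σ q))) :
    (∀ q, mfderiv J I σ q (Xσ q) = X (σ q)) ↔
      (∀ q, X (σ q) ∈ Set.range (mfderiv J I σ q)) := by
  constructor
  · intro h q
    exact ⟨Xσ q, h q⟩
  · intro h q
    obtain ⟨v, hv⟩ := h q
    have hσd : MDifferentiableAt J I σ q := (hσ q).mdifferentiableAt (by simp)
    have hpd : MDifferentiableAt I J proj (σ q) := (hproj (σ q)).mdifferentiableAt (by simp)
    have hcomp : mfderiv I J proj (σ q) ∘L mfderiv J I σ q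
        = ContinuousLinearMap.id ℝ (TangentSpace J q) := by
      rw [← mfderiv_comp q hpd hσd]
      have : proj ∘ σ = id := funext hsec
      rw [this, mfderiv_id]
    have hvq : v = Xσ q := by
      have := congrArg (fun L => L v) hcomp
      simp only [ContinuousLinearMap.coe_comp', Function.comp_apply,
        ContinuousLinearMap.coe_id', id_eq] at this
      rw [hXσ q, ← hv, this]; rfl
    rw [← hvq, hv]
end

section
/- Under the assumptions of the contact Hamilton–Jacobi setting, if a section σ of Π satisfies i_{X_H^σ} σ* dη = σ*(ξ(H) η − dH) and i_{X_H^σ} σ* η = σ* H, then the image of the map σ_* ∘ X_H^σ − X_H ∘ σ is contained in Ker Π_* ∩ (Im σ_*)^⊥ ∩ Ker η, where ⊥ denotes the dη-orthogonal. -/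
open scoped Manifold

/-- If a section `σ` satisfies `i_{X_H^σ} σ*dη = σ*(ξ(H) η − dH)` and
`i_{X_H^σ} σ*η = σ*H`, then the image of `σ_* ∘ X_H^σ − X_H ∘ σ` lies in
`Ker proj_* ∩ (Im σ_*)^⊥ ∩ Ker η`, where `⊥` is the `dη`-orthogonal. -/
theorem stmt_7
    {n : ℕ}
    {E : Type*} [NormedAddCommGroup E] [NormedSpace ℝ E] [FiniteDimensional ℝ E]
    {HM : Type*} [TopologicalSpace HM]
    (I : ModelWithCorners ℝ E HM)
    {M : Type*} [TopologicalSpace M] [ChartedSpace HM M] [IsManifold I (⊤ : ℕ∞) M]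
    (hdim : Module.finrank ℝ E = 2 * n + 1)
    -- the contact form and its exterior differential, as pointwise (bi)linear forms
    (η : (p : M) → TangentSpace I p →L[ℝ] ℝ)
    (dη : (p : M) → TangentSpace I p →L[ℝ] TangentSpace I p →L[ℝ] ℝ)
    (hskew : ∀ p (v w : TangentSpace I p), dη p v w = - dη p w v)
    -- contact condition: `(dη)^n ∧ η` is a volume form, encoded as `Ker η_p ∩ Ker dη_p = 0`
    (hcontact : ∀ p (v : TangentSpace I p),
      η p v = 0 → (∀ w, dη p v w = 0) → v = 0)
    -- the Reeb vector field
    (ξ : (p : M) → TangentSpace I p)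
    (hξ1 : ∀ p (w : TangentSpace I p), dη p (ξ p) w = 0)
    (hξ2 : ∀ p, η p (ξ p) = 1)
    -- the Hamiltonian function, its differential, `ξ(H)`, and the contact field `X_H`
    (H : M → ℝ) (hH : ContMDiff I 𝓘(ℝ, ℝ) (⊤ : ℕ∞) H)
    (dH : (p : M) → TangentSpace I p →L[ℝ] ℝ)
    (hdH : ∀ p, dH p = mfderiv I 𝓘(ℝ, ℝ) H p)
    (ξH : M → ℝ) (hξH : ∀ p, ξH p = dH p (ξ p))
    (XH : (p : M) → TangentSpace I p)
    (hXH1 : ∀ p (w : TangentSpace I p), dη p (XH p) w = - dH p w + ξH p * η p w)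
    (hXH2 : ∀ p, η p (XH p) = H p)
    -- the fibration
    {F : Type*} [NormedAddCommGroup F] [NormedSpace ℝ F] [FiniteDimensional ℝ F]
    {HN : Type*} [TopologicalSpace HN]
    (J : ModelWithCorners ℝ F HN)
    {N : Type*} [TopologicalSpace N] [ChartedSpace HN N] [IsManifold J (⊤ : ℕ∞) N]
    (proj : M → N) (hproj : ContMDiff I J (⊤ : ℕ∞) proj)
    (hsurj : Function.Surjective proj)
    (hsubm : ∀ p : M, Function.Surjective (mfderiv I J proj p))
    -- a section of the fibration and the projected field `X_H^σ := proj_* ∘ X_H ∘ σ`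
    (σ : N → M) (hσ : ContMDiff J I (⊤ : ℕ∞) σ)
    (hsec : ∀ q, proj (σ q) = q)
    (XHσ : (q : N) → TangentSpace J q)
    (hXHσ : ∀ q, XHσ q = mfderiv I J proj (σ q) (XH (σ q)))
    (hA : ∀ q (v : TangentSpace J q),
      dη (σ q) (mfderiv J I σ q (XHσ q)) (mfderiv J I σ q v) =
        ξH (σ q) * η (σ q) (mfderiv J I σ q v) - dH (σ q) (mfderiv J I σ q v))
    (hB : ∀ q, η (σ q) (mfderiv J I σ q (XHσ q)) = H (σ q)) :
    ∀ q,
      mfderiv I J proj (σ q) (mfderiv J I σ q (XHσ q) - XH (σ q)) = 0 ∧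
      (∀ u ∈ Set.range (mfderiv J I σ q),
        dη (σ q) (mfderiv J I σ q (XHσ q) - XH (σ q)) u = 0) ∧
      η (σ q) (mfderiv J I σ q (XHσ q) - XH (σ q)) = 0 := by
  intro q
  have hσd : MDifferentiableAt J I σ q := (hσ q).mdifferentiableAt (by simp)
  have hprojd : MDifferentiableAt I J proj (σ q) := (hproj (σ q)).mdifferentiableAt (by simp)
  have hcomp : mfderiv I J proj (σ q) ∘L mfderiv J I σ q =
      ContinuousLinearMap.id ℝ (TangentSpace J q) := by
    rw [← mfderiv_comp q hprojd hσd]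
    have : proj ∘ σ = id := funext hsec
    rw [this, mfderiv_id]
  have hleft : mfderiv I J proj (σ q) (mfderiv J I σ q (XHσ q)) = XHσ q := by
    have := congrArg (fun f => f (XHσ q)) hcomp
    exact this
  refine ⟨?_, ?_, ?_⟩
  · rw [map_sub, hleft, hXHσ q, sub_self]
  · rintro u ⟨v, rfl⟩
    rw [map_sub, ContinuousLinearMap.sub_apply, hA q v, hXH1]
    ring
  · rw [map_sub, hB q, hXH2, sub_self]
end

section
/- In the contact Hamilton–Jacobi setting, if the fibration Π satisfies Ker Π_* ∩ Ker η ⊆ (Ker Π_*)^⊥ (dη-orthogonal), then a section σ of Π solves the Π-Hamilton–Jacobi equation for X_H if and only if it satisfies i_{X_H^σ} σ* dη = σ*(ξ(H) η − dH) and i_{X_H^σ} σ* η = σ* H. -/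
open scoped Manifold

/-- If the fibration satisfies `Ker proj_* ∩ Ker η ⊆ (Ker proj_*)^⊥`
(`dη`-orthogonal), then a section `σ` solves the Π-Hamilton–Jacobi equation for `X_H`
iff `i_{X_H^σ} σ*dη = σ*(ξ(H) η − dH)` and `i_{X_H^σ} σ*η = σ*H`. -/
theorem stmt_8
    {n : ℕ}
    {E : Type*} [NormedAddCommGroup E] [NormedSpace ℝ E] [FiniteDimensional ℝ E]
    {HM : Type*} [TopologicalSpace HM]
    (I : ModelWithCorners ℝ E HM)
    {M : Type*} [TopologicalSpace M] [ChartedSpace HM M] [IsManifold I ((⊤ : ℕ∞) : WithTop ℕ∞) M]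
    (hdim : Module.finrank ℝ E = 2 * n + 1)
    -- the contact form and its exterior differential, as pointwise (bi)linear forms
    (η : (p : M) → TangentSpace I p →L[ℝ] ℝ)
    (dη : (p : M) → TangentSpace I p →L[ℝ] TangentSpace I p →L[ℝ] ℝ)
    (hskew : ∀ p (v w : TangentSpace I p), dη p v w = - dη p w v)
    -- contact condition: `(dη)^n ∧ η` is a volume form, encoded as `Ker η_p ∩ Ker dη_p = 0`
    (hcontact : ∀ p (v : TangentSpace I p),
      η p v = 0 → (∀ w, dη p v w = 0) → v = 0)
    -- the Reeb vector field
    (ξ : (p : M) → TangentSpace I p)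
    (hξ1 : ∀ p (w : TangentSpace I p), dη p (ξ p) w = 0)
    (hξ2 : ∀ p, η p (ξ p) = 1)
    -- the Hamiltonian function, its differential, `ξ(H)`, and the contact field `X_H`
    (H : M → ℝ) (hH : ContMDiff I 𝓘(ℝ, ℝ) (⊤ : ℕ∞) H)
    (dH : (p : M) → TangentSpace I p →L[ℝ] ℝ)
    (hdH : ∀ p, dH p = mfderiv I 𝓘(ℝ, ℝ) H p)
    (ξH : M → ℝ) (hξH : ∀ p, ξH p = dH p (ξ p))
    (XH : (p : M) → TangentSpace I p)
    (hXH1 : ∀ p (w : TangentSpace I p), dη p (XH p) w = - dH p w + ξH p * η p w)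
    (hXH2 : ∀ p, η p (XH p) = H p)
    -- the fibration
    {F : Type*} [NormedAddCommGroup F] [NormedSpace ℝ F] [FiniteDimensional ℝ F]
    {HN : Type*} [TopologicalSpace HN]
    (J : ModelWithCorners ℝ F HN)
    {N : Type*} [TopologicalSpace N] [ChartedSpace HN N] [IsManifold J ((⊤ : ℕ∞) : WithTop ℕ∞) N]
    (proj : M → N) (hproj : ContMDiff I J (⊤ : ℕ∞) proj)
    (hsurj : Function.Surjective proj)
    (hsubm : ∀ p : M, Function.Surjective (mfderiv I J proj p))
    -- a section of the fibration and the projected field `X_H^σ := proj_* ∘ X_H ∘ σ`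
    (σ : N → M) (hσ : ContMDiff J I (⊤ : ℕ∞) σ)
    (hsec : ∀ q, proj (σ q) = q)
    (XHσ : (q : N) → TangentSpace J q)
    (hXHσ : ∀ q, XHσ q = mfderiv I J proj (σ q) (XH (σ q)))
    -- pre-isotropy of the fibration: Ker proj_* ∩ Ker η ⊆ (Ker proj_*)^⊥
    (hpre : ∀ p (v : TangentSpace I p), mfderiv I J proj p v = 0 → η p v = 0 →
      ∀ w : TangentSpace I p, mfderiv I J proj p w = 0 → dη p v w = 0) :
    (∀ q, mfderiv J I σ q (XHσ q) = XH (σ q)) ↔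
      ((∀ q (v : TangentSpace J q),
      dη (σ q) (mfderiv J I σ q (XHσ q)) (mfderiv J I σ q v) =
        ξH (σ q) * η (σ q) (mfderiv J I σ q v) - dH (σ q) (mfderiv J I σ q v)) ∧
       (∀ q, η (σ q) (mfderiv J I σ q (XHσ q)) = H (σ q))) := by

  have hid : ∀ q (w : TangentSpace J q), mfderiv I J proj (σ q) (mfderiv J I σ q w) = w := by
    intro q w
    have h1 : proj ∘ σ = id := funext hsec
    have h2 := mfderiv_comp q (hproj.mdifferentiable (by simp) (σ q))
      (hσ.mdifferentiable (by simp) q)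
    rw [h1, mfderiv_id] at h2
    have h3 := congrArg (fun L : TangentSpace J q →L[ℝ] TangentSpace J q => L w) h2
    exact h3.symm
  constructor
  · intro hHJ
    refine ⟨fun q v => ?_, fun q => ?_⟩
    · rw [hHJ q, hXH1]; ring
    · rw [hHJ q, hXH2]
  · rintro ⟨h1, h2⟩ q
    set v : TangentSpace I (σ q) := mfderiv J I σ q (XHσ q) - XH (σ q) with hv
    have hpv : mfderiv I J proj (σ q) v = 0 := by
      rw [hv, map_sub, hid, ← hXHσ]; exact sub_self _
    have hηv : η (σ q) v = 0 := by
      rw [hv, map_sub, h2 q, hXH2, sub_self]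
    have hall : ∀ w, dη (σ q) v w = 0 := by
      intro w
      set w1 : TangentSpace I (σ q) := mfderiv J I σ q (mfderiv I J proj (σ q) w) with hw1
      have hw2 : mfderiv I J proj (σ q) (w - w1) = 0 := by
        rw [map_sub, hw1]; exact sub_eq_zero.mpr (hid q _).symm
      have hsplit : dη (σ q) v w = dη (σ q) v w1 + dη (σ q) v (w - w1) := by
        rw [(dη (σ q) v).map_sub]; ring
      have hA : dη (σ q) v w1 = 0 := by
        have := h1 q (mfderiv I J proj (σ q) w)
        rw [hv, map_sub, ContinuousLinearMap.sub_apply, ← hw1] at *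
        rw [this, hXH1]; ring
      have hB : dη (σ q) v (w - w1) = 0 := hpre (σ q) v hpv hηv (w - w1) hw2
      rw [hsplit, hA, hB, add_zero]
    have : v = 0 := hcontact (σ q) v hηv hall
    have := sub_eq_zero.mp (hv ▸ this)
    exact this
end

section
/- In the contact Hamilton–Jacobi setting, if a section σ of Π satisfies (Im σ_*)^⊥ ∩ Ker η ⊆ Im σ_* (where ⊥ is dη-orthogonal), then σ solves the Π-Hamilton–Jacobi equation for X_H if and only if i_{X_H^σ} σ* dη = σ*(ξ(H) η − dH) and i_{X_H^σ} σ* η = σ* H. -/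
open scoped Manifold

/-- If a section `σ` satisfies `(Im σ_*)^⊥ ∩ Ker η ⊆ Im σ_*` (`dη`-orthogonal),
then `σ` solves the Π-Hamilton–Jacobi equation for `X_H` iff
`i_{X_H^σ} σ*dη = σ*(ξ(H) η − dH)` and `i_{X_H^σ} σ*η = σ*H`. -/
theorem stmt_9
    {n : ℕ}
    {E : Type*} [NormedAddCommGroup E] [NormedSpace ℝ E] [FiniteDimensional ℝ E]
    {HM : Type*} [TopologicalSpace HM]
    (I : ModelWithCorners ℝ E HM)
    {M : Type*} [TopologicalSpace M] [ChartedSpace HM M] [IsManifold I (⊤ : ℕ∞) M]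
    (hdim : Module.finrank ℝ E = 2 * n + 1)
    -- the contact form and its exterior differential, as pointwise (bi)linear forms
    (η : (p : M) → TangentSpace I p →L[ℝ] ℝ)
    (dη : (p : M) → TangentSpace I p →L[ℝ] TangentSpace I p →L[ℝ] ℝ)
    (hskew : ∀ p (v w : TangentSpace I p), dη p v w = - dη p w v)
    -- contact condition: `(dη)^n ∧ η` is a volume form, encoded as `Ker η_p ∩ Ker dη_p = 0`
    (hcontact : ∀ p (v : TangentSpace I p),
      η p v = 0 → (∀ w, dη p v w = 0) → v = 0)
    -- the Reeb vector field
    (ξ : (p : M) → TangentSpace I p)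
    (hξ1 : ∀ p (w : TangentSpace I p), dη p (ξ p) w = 0)
    (hξ2 : ∀ p, η p (ξ p) = 1)
    -- the Hamiltonian function, its differential, `ξ(H)`, and the contact field `X_H`
    (H : M → ℝ) (hH : ContMDiff I 𝓘(ℝ, ℝ) (⊤ : ℕ∞) H)
    (dH : (p : M) → TangentSpace I p →L[ℝ] ℝ)
    (hdH : ∀ p, dH p = mfderiv I 𝓘(ℝ, ℝ) H p)
    (ξH : M → ℝ) (hξH : ∀ p, ξH p = dH p (ξ p))
    (XH : (p : M) → TangentSpace I p)
    (hXH1 : ∀ p (w : TangentSpace I p), dη p (XH p) w = - dH p w + ξH p * η p w)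
    (hXH2 : ∀ p, η p (XH p) = H p)
    -- the fibration
    {F : Type*} [NormedAddCommGroup F] [NormedSpace ℝ F] [FiniteDimensional ℝ F]
    {HN : Type*} [TopologicalSpace HN]
    (J : ModelWithCorners ℝ F HN)
    {N : Type*} [TopologicalSpace N] [ChartedSpace HN N] [IsManifold J (⊤ : ℕ∞) N]
    (proj : M → N) (hproj : ContMDiff I J (⊤ : ℕ∞) proj)
    (hsurj : Function.Surjective proj)
    (hsubm : ∀ p : M, Function.Surjective (mfderiv I J proj p))
    -- a section of the fibration and the projected field `X_H^σ := proj_* ∘ X_H ∘ σ`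
    (σ : N → M) (hσ : ContMDiff J I (⊤ : ℕ∞) σ)
    (hsec : ∀ q, proj (σ q) = q)
    (XHσ : (q : N) → TangentSpace J q)
    (hXHσ : ∀ q, XHσ q = mfderiv I J proj (σ q) (XH (σ q)))
    -- (Im σ_*)^⊥ ∩ Ker η ⊆ Im σ_*
    (hco : ∀ q (v : TangentSpace I (σ q)),
      (∀ u : TangentSpace J q, dη (σ q) v (mfderiv J I σ q u) = 0) →
      η (σ q) v = 0 → v ∈ Set.range (mfderiv J I σ q)) :
    (∀ q, mfderiv J I σ q (XHσ q) = XH (σ q)) ↔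
      ((∀ q (v : TangentSpace J q),
      dη (σ q) (mfderiv J I σ q (XHσ q)) (mfderiv J I σ q v) =
        ξH (σ q) * η (σ q) (mfderiv J I σ q v) - dH (σ q) (mfderiv J I σ q v)) ∧
       (∀ q, η (σ q) (mfderiv J I σ q (XHσ q)) = H (σ q))) := by

  have hchain : ∀ q : N, ∀ u : TangentSpace J q,
      mfderiv I J proj (σ q) (mfderiv J I σ q u) = u := by
    intro q u
    have hid : proj ∘ σ = id := funext hsec
    have h1 : mfderiv J J (proj ∘ σ) q =
        (mfderiv I J proj (σ q)).comp (mfderiv J I σ q) :=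
      mfderiv_comp q ((hproj.mdifferentiable (by simp)) (σ q))
        ((hσ.mdifferentiable (by simp)) q)
    have h2 : mfderiv J J (proj ∘ σ) q = ContinuousLinearMap.id ℝ _ := by
      rw [hid, mfderiv_id]
    have := h2 ▸ h1
    have := congrArg (fun f : TangentSpace J q →L[ℝ] TangentSpace J q => f u) this.symm
    exact this
  constructor
  · intro hHJ
    constructor
    · intro q v
      rw [hHJ q, hXH1]
      ring
    · intro q
      rw [hHJ q, hXH2]
  · rintro ⟨h1, h2⟩ q
    set v : TangentSpace I (σ q) := mfderiv J I σ q (XHσ q) - XH (σ q) with hv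
    have hηv : η (σ q) v = 0 := by
      rw [hv, map_sub, h2 q, hXH2]; ring
    have hdηv : ∀ u : TangentSpace J q, dη (σ q) v (mfderiv J I σ q u) = 0 := by
      intro u
      have := h1 q u
      rw [hv, map_sub, ContinuousLinearMap.sub_apply, this, hXH1]
      ring
    obtain ⟨u, hu⟩ := hco q v hdηv hηv
    have hpv : mfderiv I J proj (σ q) v = 0 := by
      rw [hv, map_sub, ← hXHσ q, hchain q (XHσ q)]; exact sub_self _
    have hu0 : u = 0 := by
      have := hchain q u
      rw [hu, hpv] at this
      exact this.symm
    have hv0 : v = 0 := by rw [← hu, hu0, map_zero]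
    have := sub_eq_zero.mp hv0
    exact this
end

section
/- A surjective local diffeomorphism Σ : N × Λ → M satisfying Π ∘ Σ = pr_N is a complete solution of the Π-Hamilton–Jacobi equation for a contact field X_H if and only if i_{X_H^Σ} Σ* dη = Σ*(ξ(H) η − dH) and i_{X_H^Σ} Σ* η = Σ* H, i.e. X_H^Σ is a contact Hamiltonian field on (N × Λ, Σ* η) with Hamiltonian H ∘ Σ. -/
open scoped Manifold

/-- A surjective local diffeomorphism `Σ : N × Λ → M` with `proj ∘ Σ = pr_N`
is a complete solution of the Π-Hamilton–Jacobi equation for the contact field `X_H` iff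
`i_{X_H^Σ} Σ*dη = Σ*(ξ(H) η − dH)` and `i_{X_H^Σ} Σ*η = Σ*H`, i.e. `X_H^Σ` is a contact
Hamiltonian field on `(N × Λ, Σ*η)` with Hamiltonian `H ∘ Σ`. -/
theorem stmt_11
    {n : ℕ}
    {E : Type*} [NormedAddCommGroup E] [NormedSpace ℝ E] [FiniteDimensional ℝ E]
    {HM : Type*} [TopologicalSpace HM]
    (I : ModelWithCorners ℝ E HM)
    {M : Type*} [TopologicalSpace M] [ChartedSpace HM M] [IsManifold I (⊤ : ℕ∞) M]
    (hdim : Module.finrank ℝ E = 2 * n + 1)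
    -- the contact form and its exterior differential, as pointwise (bi)linear forms
    (η : (p : M) → TangentSpace I p →L[ℝ] ℝ)
    (dη : (p : M) → TangentSpace I p →L[ℝ] TangentSpace I p →L[ℝ] ℝ)
    (hskew : ∀ p (v w : TangentSpace I p), dη p v w = - dη p w v)
    -- contact condition: `(dη)^n ∧ η` is a volume form, encoded as `Ker η_p ∩ Ker dη_p = 0`
    (hcontact : ∀ p (v : TangentSpace I p),
      η p v = 0 → (∀ w, dη p v w = 0) → v = 0)
    -- the Reeb vector field
    (ξ : (p : M) → TangentSpace I p)
    (hξ1 : ∀ p (w : TangentSpace I p), dη p (ξ p) w = 0)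
    (hξ2 : ∀ p, η p (ξ p) = 1)
    -- the Hamiltonian function, its differential, `ξ(H)`, and the contact field `X_H`
    (H : M → ℝ) (hH : ContMDiff I 𝓘(ℝ, ℝ) (⊤ : ℕ∞) H)
    (dH : (p : M) → TangentSpace I p →L[ℝ] ℝ)
    (hdH : ∀ p, dH p = mfderiv I 𝓘(ℝ, ℝ) H p)
    (ξH : M → ℝ) (hξH : ∀ p, ξH p = dH p (ξ p))
    (XH : (p : M) → TangentSpace I p)
    (hXH1 : ∀ p (w : TangentSpace I p), dη p (XH p) w = - dH p w + ξH p * η p w)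
    (hXH2 : ∀ p, η p (XH p) = H p)
    -- the fibration
    {F : Type*} [NormedAddCommGroup F] [NormedSpace ℝ F] [FiniteDimensional ℝ F]
    {HN : Type*} [TopologicalSpace HN]
    (J : ModelWithCorners ℝ F HN)
    {N : Type*} [TopologicalSpace N] [ChartedSpace HN N] [IsManifold J (⊤ : ℕ∞) N]
    (proj : M → N) (hproj : ContMDiff I J (⊤ : ℕ∞) proj)
    (hsurj : Function.Surjective proj)
    (hsubm : ∀ p : M, Function.Surjective (mfderiv I J proj p))
    -- the parameter manifold Λ
    {G : Type*} [NormedAddCommGroup G] [NormedSpace ℝ G] [FiniteDimensional ℝ G]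
    {HL : Type*} [TopologicalSpace HL]
    (K : ModelWithCorners ℝ G HL)
    {Λ : Type*} [TopologicalSpace Λ] [ChartedSpace HL Λ] [IsManifold K (⊤ : ℕ∞) Λ]
    -- Σ : N × Λ → M, a surjective local diffeomorphism with proj ∘ Σ = pr_N
    (S : N × Λ → M) (hS : ContMDiff (J.prod K) I (⊤ : ℕ∞) S)
    (hSsurj : Function.Surjective S)
    (hSloc : ∀ x, Function.Bijective (mfderiv (J.prod K) I S x))
    (hSfib : ∀ x, proj (S x) = x.1)
    -- the vector field X_H^Σ on N × Λ, characterized by its two projections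
    (XHS : (x : N × Λ) → TangentSpace (J.prod K) x)
    (hXHS1 : ∀ x, mfderiv (J.prod K) J Prod.fst x (XHS x) =
      mfderiv I J proj (S x) (XH (S x)))
    (hXHS2 : ∀ x, mfderiv (J.prod K) K Prod.snd x (XHS x) = 0) :
    -- Σ is a complete solution: every σ_l := S (·, l) solves the Π-HJE for X_H
    (∀ (l : Λ) (q : N),
        mfderiv J I (fun q => S (q, l)) q
          (mfderiv I J proj (S (q, l)) (XH (S (q, l)))) = XH (S (q, l))) ↔
      ((∀ x (v : TangentSpace (J.prod K) x),
          dη (S x) (mfderiv (J.prod K) I S x (XHS x)) (mfderiv (J.prod K) I S x v) =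
            ξH (S x) * η (S x) (mfderiv (J.prod K) I S x v)
              - dH (S x) (mfderiv (J.prod K) I S x v)) ∧
       (∀ x, η (S x) (mfderiv (J.prod K) I S x (XHS x)) = H (S x))) := by
  have hSd : ∀ x, MDifferentiableAt (J.prod K) I S x := fun x =>
    (hS x).mdifferentiableAt (by simp)
  -- XHS x is the pair (mfderiv proj (XH), 0)
  have hXHSeq : ∀ x : N × Λ, XHS x = (mfderiv I J proj (S x) (XH (S x)), 0) := by
    intro x
    have h1 := hXHS1 x
    have h2 := hXHS2 x
    rw [mfderiv_fst] at h1
    rw [mfderiv_snd] at h2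
    exact Prod.ext h1 h2
  -- chain rule for σ_l
  have key : ∀ (l : Λ) (q : N), mfderiv J I (fun q => S (q, l)) q =
      (mfderiv (J.prod K) I S (q, l)).comp
        (ContinuousLinearMap.inl ℝ (TangentSpace J q) (TangentSpace K l)) := by
    intro l q
    have h1 : MDifferentiableAt J (J.prod K) (fun q : N => (q, l)) q :=
      mdifferentiableAt_id.prodMk mdifferentiableAt_const
    have hc := mfderiv_comp (I' := J.prod K) q (hSd (q, l)) h1
    rw [show (S ∘ fun q : N => (q, l)) = fun q : N => S (q, l) from rfl] at hc
    rw [hc, mfderiv_prod_left]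
  have main : ∀ x : N × Λ,
      mfderiv (J.prod K) I S x (XHS x) =
        mfderiv J I (fun q => S (q, x.2)) x.1
          (mfderiv I J proj (S x) (XH (S x))) := by
    rintro ⟨q, l⟩
    rw [key l q, hXHSeq (q, l)]
    rfl
  constructor
  · intro hHJ
    have heq : ∀ x : N × Λ, mfderiv (J.prod K) I S x (XHS x) = XH (S x) := by
      rintro ⟨q, l⟩
      rw [main (q, l)]
      exact hHJ l q
    refine ⟨fun x v => ?_, fun x => ?_⟩
    · rw [heq x, hXH1]; ring
    · rw [heq x, hXH2]
  · rintro ⟨h1, h2⟩ l q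
    set x : N × Λ := (q, l) with hx
    have heq : mfderiv (J.prod K) I S x (XHS x) = XH (S x) := by
      have hη : η (S x) (mfderiv (J.prod K) I S x (XHS x) - XH (S x)) = 0 := by
        rw [map_sub, h2 x, hXH2]; ring
      have hdη : ∀ w, dη (S x) (mfderiv (J.prod K) I S x (XHS x) - XH (S x)) w = 0 := by
        intro w
        obtain ⟨v, hv⟩ := (hSloc x).2 w
        rw [map_sub, ContinuousLinearMap.sub_apply, ← hv, h1 x v, hXH1]
        ring
      have := hcontact (S x) _ hη hdη
      exact sub_eq_zero.mp this
    rw [← main x]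
    exact heq
end

section
/- Let (M, η) be a contact manifold with Reeb field ξ and H ∈ C^∞(M) with ξ(H) nowhere vanishing and 0 a regular value of H. Then M_0 := H^{-1}(0) is a symplectic manifold with symplectic form dη_0, where η_0 = i_0* η is the pullback of η along the inclusion i_0 : M_0 → M; moreover M_0 is invariant under the contact field X_H, i.e. there exists Y ∈ 𝔛(M_0) with (i_0)_* ∘ Y = X_H ∘ i_0. -/
open scoped Manifold

/-- If `ξ(H)` is nowhere vanishing and `0` is a regular value of `H`, then
`M₀ := H⁻¹(0)` is a symplectic manifold with symplectic form `dη₀ = i₀* dη` (i.e. `dη`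
restricted to `T_p M₀ = Ker dH_p` is nondegenerate), and `M₀` is `X_H`-invariant
(`X_H` is tangent to `M₀`, i.e. `dH(X_H) = 0` on `M₀`). -/
theorem stmt_17
    {n : ℕ}
    {E : Type*} [NormedAddCommGroup E] [NormedSpace ℝ E] [FiniteDimensional ℝ E]
    {HM : Type*} [TopologicalSpace HM]
    (I : ModelWithCorners ℝ E HM)
    {M : Type*} [TopologicalSpace M] [ChartedSpace HM M] [IsManifold I ((⊤ : ℕ∞) : WithTop ℕ∞) M]
    (hdim : Module.finrank ℝ E = 2 * n + 1)
    -- the contact form and its exterior differential, as pointwise (bi)linear forms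
    (η : (p : M) → TangentSpace I p →L[ℝ] ℝ)
    (dη : (p : M) → TangentSpace I p →L[ℝ] TangentSpace I p →L[ℝ] ℝ)
    (hskew : ∀ p (v w : TangentSpace I p), dη p v w = - dη p w v)
    -- contact condition: `(dη)^n ∧ η` is a volume form, encoded as `Ker η_p ∩ Ker dη_p = 0`
    (hcontact : ∀ p (v : TangentSpace I p),
      η p v = 0 → (∀ w, dη p v w = 0) → v = 0)
    -- the Reeb vector field
    (ξ : (p : M) → TangentSpace I p)
    (hξ1 : ∀ p (w : TangentSpace I p), dη p (ξ p) w = 0)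
    (hξ2 : ∀ p, η p (ξ p) = 1)
    -- the Hamiltonian function, its differential, `ξ(H)`, and the contact field `X_H`
    (H : M → ℝ) (hH : ContMDiff I 𝓘(ℝ, ℝ) (⊤ : ℕ∞) H)
    (dH : (p : M) → TangentSpace I p →L[ℝ] ℝ)
    (hdH : ∀ p, dH p = mfderiv I 𝓘(ℝ, ℝ) H p)
    (ξH : M → ℝ) (hξH : ∀ p, ξH p = dH p (ξ p))
    (XH : (p : M) → TangentSpace I p)
    (hXH1 : ∀ p (w : TangentSpace I p), dη p (XH p) w = - dH p w + ξH p * η p w)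
    (hXH2 : ∀ p, η p (XH p) = H p)
    -- 0 is a regular value of H
    (hreg : ∀ p, H p = 0 → dH p ≠ 0)
    -- ξ(H) is nowhere vanishing
    (hξH0 : ∀ p, ξH p ≠ 0) :
    ∀ p, H p = 0 →
      -- dη is nondegenerate on T_p M₀ = Ker dH_p
      ((∀ v : TangentSpace I p, dH p v = 0 →
          (∀ w : TangentSpace I p, dH p w = 0 → dη p v w = 0) → v = 0) ∧
       -- X_H is tangent to M₀
       dH p (XH p) = 0) := by
  intro p hp
  constructor
  · intro v hv hvw
    -- dη p v (ξ p) = 0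
    have hvξ : dη p v (ξ p) = 0 := by
      rw [hskew p v (ξ p), hξ1 p v, neg_zero]
    -- dη p v w = 0 for all w
    have hall : ∀ w : TangentSpace I p, dη p v w = 0 := by
      intro w
      set c : ℝ := dH p w / ξH p with hc
      have hker : dH p (w - c • ξ p) = 0 := by
        have hξHp : dH p (ξ p) = ξH p := (hξH p).symm
        rw [map_sub, map_smul, hξHp]
        rw [hc, smul_eq_mul, div_mul_cancel₀ _ (hξH0 p), sub_self]
      have h0 : dη p v (w - c • ξ p) = 0 := hvw _ hker
      rw [map_sub, map_smul, hvξ, smul_zero, sub_zero] at h0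
      exact h0
    -- η p v = 0
    have hηv : η p v = 0 := by
      have h1 := hXH1 p v
      have h2 : dη p (XH p) v = 0 := by
        rw [hskew p (XH p) v, hall (XH p), neg_zero]
      rw [h2, hv, neg_zero, zero_add] at h1
      exact (mul_eq_zero.mp h1.symm).resolve_left (hξH0 p)
    exact hcontact p v hηv hall
  · have h1 := hXH1 p (XH p)
    have h2 : dη p (XH p) (XH p) = 0 := by
      have := hskew p (XH p) (XH p); linarith
    rw [h2, hXH2 p, hp, mul_zero, add_zero] at h1
    linarith
end
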